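/- There exists a bijection f from ZMod 12 to the vertex set of the icosahedron graph such that f(x) is adjacent to f(x+1) for every x in ZMod 12, and f(x) is adjacent to f(x+2) for every even x. (A chromatic/whole tone musical icosahedron exists.) -/

import Mathlib

noncomputable section

/-- Points of `ℝ³` with the Euclidean metric. -/
abbrev E3 : Type := EuclideanSpace ℝ (Fin 3)

/-- Constructor for explicit points of `E3`. -/
def pt (a b c : ℝ) : E3 := (WithLp.equiv 2 (Fin 3 → ℝ)).symm ![a, b, c]

/-- The vertex set of the regular icosahedron with edge length 2: the twelve points
`(0,±1,±φ)`, `(±1,±φ,0)`, `(±φ,0,±1)` where `φ` is the golden ratio. -/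
def icoVertexSet : Set E3 :=
  {p | ∃ a b : ℝ, (a = 1 ∨ a = -1) ∧ (b = Real.goldenRatio ∨ b = -Real.goldenRatio) ∧
    (p = pt 0 a b ∨ p = pt a b 0 ∨ p = pt b 0 a)}

/-- The type of vertices of the icosahedron. -/
abbrev IcoVert : Type := {p : E3 // p ∈ icoVertexSet}

/-- The icosahedron graph: two vertices are adjacent iff their Euclidean distance
equals 2 (the edge length). -/
def icoGraph : SimpleGraph IcoVert where
  Adj u v := dist (u : E3) (v : E3) = 2
  symm := by constructor; intro u v h; rwa [dist_comm] at h
  loopless := by constructor; intro u h; rw [dist_self] at h; norm_num at h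

/-- The chromatic neighboring condition. -/
def Chromatic (f : ZMod 12 → IcoVert) : Prop :=
  ∀ x : ZMod 12, icoGraph.Adj (f x) (f (x + 1))

/-- The Pythagorean-chain neighboring condition. -/
def Pythagorean (f : ZMod 12 → IcoVert) : Prop :=
  ∀ x : ZMod 12, icoGraph.Adj (f x) (f (x + 7))

/-- The whole-tone neighboring condition for the whole tone scale containing `C`. -/
def WholeToneEven (f : ZMod 12 → IcoVert) : Prop :=
  ∀ x : ZMod 12, Even x → icoGraph.Adj (f x) (f (x + 2))

/-- The whole-tone neighboring condition for the whole tone scale containing `C♯`. -/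
def WholeToneOdd (f : ZMod 12 → IcoVert) : Prop :=
  ∀ x : ZMod 12, Odd x → icoGraph.Adj (f x) (f (x + 2))

/-- A chromatic/whole tone musical icosahedron. -/
def ChromaticWT (f : ZMod 12 → IcoVert) : Prop :=
  Chromatic f ∧ (WholeToneEven f ∨ WholeToneOdd f)

/-- A Pythagorean/whole tone musical icosahedron. -/
def PythagoreanWT (f : ZMod 12 → IcoVert) : Prop :=
  Pythagorean f ∧ (WholeToneEven f ∨ WholeToneOdd f)

/-- Musical isomorphism: post-composition with a graph automorphism. -/
def MusIso (f g : ZMod 12 → IcoVert) : Prop :=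
  ∃ σ : icoGraph ≃g icoGraph, ∀ x : ZMod 12, g x = σ (f x)

/-- Hexagon-icosahedron symmetry: raising all tones by a whole tone corresponds to a
symmetry transformation of the icosahedron. -/
def HexSym (f : ZMod 12 → IcoVert) : Prop :=
  ∃ σ : icoGraph ≃g icoGraph, ∀ x : ZMod 12, f (x + 2) = σ (f x)

/-- Three points form a golden triangle: pairwise distances `2φ, 2φ, 2`. -/
def IsGoldenTriangle (p q r : E3) : Prop :=
  ({dist p q, dist q r, dist p r} : Multiset ℝ) =
    ({2 * Real.goldenRatio, 2 * Real.goldenRatio, 2} : Multiset ℝ)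

/-- Three points form a golden gnomon: pairwise distances `2, 2, 2φ`. -/
def IsGoldenGnomon (p q r : E3) : Prop :=
  ({dist p q, dist q r, dist p r} : Multiset ℝ) =
    ({2, 2, 2 * Real.goldenRatio} : Multiset ℝ)

lemma pt_apply (a b c : ℝ) : pt a b c = ![a, b, c] := rfl

lemma dist_pt (a b c d e f : ℝ) :
    dist (pt a b c) (pt d e f) = Real.sqrt ((a-d)^2+(b-e)^2+(c-f)^2) := by
  rw [EuclideanSpace.dist_eq]
  congr 1
  simp [pt_apply, Fin.sum_univ_three, Real.dist_eq, sq_abs]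

lemma adj_pt {a b c d e f : ℝ} (h : (a-d)^2+(b-e)^2+(c-f)^2 = 4) :
    dist (pt a b c) (pt d e f) = 2 := by
  rw [dist_pt, h, show (4:ℝ) = 2^2 by norm_num, Real.sqrt_sq (by norm_num)]

lemma pt_inj {a b c d e f : ℝ} (h : pt a b c = pt d e f) : a = d ∧ b = e ∧ c = f := by
  have h0 := congrFun (congrArg (WithLp.equiv 2 (Fin 3 → ℝ)) h)
  refine ⟨h0 0, h0 1, h0 2⟩

def V0 : IcoVert := ⟨pt 0 1 Real.goldenRatio, ⟨1, Real.goldenRatio, Or.inl rfl, Or.inl rfl, Or.inl rfl⟩⟩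
def V1 : IcoVert := ⟨pt 1 Real.goldenRatio 0, ⟨1, Real.goldenRatio, Or.inl rfl, Or.inl rfl, Or.inr (Or.inl rfl)⟩⟩
def V2 : IcoVert := ⟨pt Real.goldenRatio 0 1, ⟨1, Real.goldenRatio, Or.inl rfl, Or.inl rfl, Or.inr (Or.inr rfl)⟩⟩
def V3 : IcoVert := ⟨pt 1 (-Real.goldenRatio) 0, ⟨1, -Real.goldenRatio, Or.inl rfl, Or.inr rfl, Or.inr (Or.inl rfl)⟩⟩
def V4 : IcoVert := ⟨pt Real.goldenRatio 0 (-1), ⟨-1, Real.goldenRatio, Or.inr rfl, Or.inl rfl, Or.inr (Or.inr rfl)⟩⟩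
def V5 : IcoVert := ⟨pt 0 1 (-Real.goldenRatio), ⟨1, -Real.goldenRatio, Or.inl rfl, Or.inr rfl, Or.inl rfl⟩⟩
def V6 : IcoVert := ⟨pt 0 (-1) (-Real.goldenRatio), ⟨-1, -Real.goldenRatio, Or.inr rfl, Or.inr rfl, Or.inl rfl⟩⟩
def V7 : IcoVert := ⟨pt (-1) (-Real.goldenRatio) 0, ⟨-1, -Real.goldenRatio, Or.inr rfl, Or.inr rfl, Or.inr (Or.inl rfl)⟩⟩
def V8 : IcoVert := ⟨pt (-Real.goldenRatio) 0 (-1), ⟨-1, -Real.goldenRatio, Or.inr rfl, Or.inr rfl, Or.inr (Or.inr rfl)⟩⟩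
def V9 : IcoVert := ⟨pt (-1) Real.goldenRatio 0, ⟨-1, Real.goldenRatio, Or.inr rfl, Or.inl rfl, Or.inr (Or.inl rfl)⟩⟩
def V10 : IcoVert := ⟨pt (-Real.goldenRatio) 0 1, ⟨1, -Real.goldenRatio, Or.inl rfl, Or.inr rfl, Or.inr (Or.inr rfl)⟩⟩
def V11 : IcoVert := ⟨pt 0 (-1) Real.goldenRatio, ⟨-1, Real.goldenRatio, Or.inr rfl, Or.inl rfl, Or.inl rfl⟩⟩

def musF : ZMod 12 → IcoVert :=
  ![V0, V1, V2, V3, V4, V5, V6, V7, V8, V9, V10, V11]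

/-- A chromatic/whole tone musical icosahedron exists: a bijection satisfying the chromatic
neighboring condition and the whole-tone neighboring condition for the whole tone scale
containing `C`. -/
theorem chromatic_whole_tone_exists :
    ∃ f : ZMod 12 → IcoVert, Function.Bijective f ∧ Chromatic f ∧ WholeToneEven f := by
  have hφ := Real.one_lt_goldenRatio
  refine ⟨musF, ⟨?_, ?_⟩, ?_, ?_⟩
  · intro x y h
    fin_cases x <;> fin_cases y <;>
      first
        | rfl
        | (exfalso
           obtain ⟨h1, h2, h3⟩ := pt_inj (congrArg Subtype.val h)
           linarith)
  · rintro ⟨p, a, b, (rfl|rfl), (rfl|rfl), (rfl|rfl|rfl)⟩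
    exacts [⟨0, Subtype.ext rfl⟩, ⟨1, Subtype.ext rfl⟩, ⟨2, Subtype.ext rfl⟩,
      ⟨5, Subtype.ext rfl⟩, ⟨3, Subtype.ext rfl⟩, ⟨10, Subtype.ext rfl⟩,
      ⟨11, Subtype.ext rfl⟩, ⟨9, Subtype.ext rfl⟩, ⟨4, Subtype.ext rfl⟩,
      ⟨6, Subtype.ext rfl⟩, ⟨7, Subtype.ext rfl⟩, ⟨8, Subtype.ext rfl⟩]
  · intro x
    fin_cases x <;> exact adj_pt (by nlinarith [Real.goldenRatio_sq, Real.one_lt_goldenRatio])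
  · intro x hx
    obtain ⟨k, hk⟩ := hx
    subst hk
    fin_cases k <;> exact adj_pt (by nlinarith [Real.goldenRatio_sq, Real.one_lt_goldenRatio])

end
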